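/- Let λ, λ₃, μ₁, μ₂, μ₃, c, c̃ be real numbers with c ≠ c̃ satisfying λ₃ = −2λ, c + λ² = c̃ + μ₁μ₂, c + λλ₃ = c̃ + μ₁μ₃ and c + λλ₃ = c̃ + μ₂μ₃. Then either (μ₁ = μ₂, μ₁ ≠ 0 and 2μ₁ + μ₃ = 3(c − c̃)/μ₁), or (μ₃ = 0, λ ≠ 0 and c − c̃ = 2λ²). -/
import Mathlib


/-- Gauss equations, multiplicity-two case with c ≠ c̃. -/
theorem stmt_15 (lam lam₃ mu₁ mu₂ mu₃ c ct : ℝ) (hc : c ≠ ct)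
    (h0 : lam₃ = -2 * lam)
    (h1 : c + lam ^ 2 = ct + mu₁ * mu₂)
    (h2 : c + lam * lam₃ = ct + mu₁ * mu₃)
    (h3 : c + lam * lam₃ = ct + mu₂ * mu₃) :
    (mu₁ = mu₂ ∧ mu₁ ≠ 0 ∧ 2 * mu₁ + mu₃ = 3 * (c - ct) / mu₁) ∨
    (mu₃ = 0 ∧ lam ≠ 0 ∧ c - ct = 2 * lam ^ 2) := by
  subst h0
  have key : (mu₁ - mu₂) * mu₃ = 0 := by nlinarith [h2, h3]
  rcases mul_eq_zero.1 key with h | h3z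
  · have heq : mu₁ = mu₂ := by linarith
    subst heq
    by_cases h3zero : mu₃ = 0
    · right
      subst h3zero
      refine ⟨rfl, ?_, by nlinarith⟩
      intro hl; apply hc; subst hl; nlinarith
    · left
      have hmu : mu₁ ≠ 0 := by
        intro hm
        apply hc
        subst hm
        nlinarith
      refine ⟨rfl, hmu, ?_⟩
      field_simp
      nlinarith
  · right
    subst h3z
    refine ⟨rfl, ?_, by nlinarith⟩
    intro hl; apply hc; subst hl; nlinarith
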